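/- Let α be a real number with 0 < α < 1/2, and let τ > 0. Then there exists κ₀ > 0 such that for every real κ ≥ κ₀, all integers m₁ and m₂, and every complex number ζ the following holds: setting x = 2 + m₁/α and y = 2 + m₂/α, if ζ⁴ − (2 + κ²·(x² + y²))·ζ² + (1 + κ²·(x² + y²) + κ⁴·x²·y² − 4κ²·x·y) = 0, then |Re ζ| ≥ τ. -/

import Mathlib

set_option maxHeartbeats 800000


/-- Lemma 1.3.1: for `α ∈ (0,1/2)` and any `τ > 0`, for `κ` large enough
every root `ζ` of the quartic indicial equation (with `x = 2 + m₁/α`,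
`y = 2 + m₂/α`, `m₁ m₂ : ℤ`) satisfies `|Re ζ| ≥ τ`. -/
theorem indicial_roots_gap (α : ℝ) (hα0 : 0 < α) (hα : α < 1/2)
    (τ : ℝ) (hτ : 0 < τ) :
    ∃ κ₀ : ℝ, 0 < κ₀ ∧ ∀ κ : ℝ, κ₀ ≤ κ → ∀ m₁ m₂ : ℤ, ∀ ζ : ℂ,
      ζ ^ 4
        - ((2 + κ^2 * ((2 + (m₁ : ℝ)/α)^2 + (2 + (m₂ : ℝ)/α)^2) : ℝ) : ℂ) * ζ ^ 2
        + ((1 + κ^2 * ((2 + (m₁ : ℝ)/α)^2 + (2 + (m₂ : ℝ)/α)^2)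
            + κ^4 * (2 + (m₁ : ℝ)/α)^2 * (2 + (m₂ : ℝ)/α)^2
            - 4 * κ^2 * (2 + (m₁ : ℝ)/α) * (2 + (m₂ : ℝ)/α) : ℝ) : ℂ) = 0 →
      τ ≤ |ζ.re| := by
  set γ : ℝ := min 2 ((1 - 2*α)/α) with hγdef
  have hγ0 : 0 < γ := lt_min (by norm_num) (div_pos (by linarith) hα0)
  have hxlb : ∀ m : ℤ, γ ≤ |2 + (m:ℝ)/α| := by
    intro m
    rcases le_or_gt 0 m with hm | hm
    · have h1 : (0:ℝ) ≤ (m:ℝ)/α := div_nonneg (by exact_mod_cast hm) hα0.le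
      have h2 : (2:ℝ) ≤ 2 + (m:ℝ)/α := by linarith
      exact le_trans (min_le_left _ _) (le_trans h2 (le_abs_self _))
    · have hm1 : (m:ℝ) ≤ -1 := by exact_mod_cast (by omega : m ≤ -1)
      have h1 : (m:ℝ)/α ≤ (-1)/α := (div_le_div_iff_of_pos_right hα0).mpr hm1
      have h2 : (1 - 2*α)/α = 1/α - 2 := by field_simp
      have h3 : γ ≤ 1/α - 2 := h2 ▸ min_le_right _ _
      have h4 : 2 + (m:ℝ)/α ≤ -(1/α - 2) := by
        have : (-1)/α = -(1/α) := by ring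
        linarith [this ▸ h1]
      have h5 : γ ≤ -(2 + (m:ℝ)/α) := by linarith
      exact h5.trans (neg_le_abs _)
  refine ⟨(4 + 2*τ)/γ, div_pos (by linarith) hγ0, ?_⟩
  intro κ hκ m₁ m₂ ζ heq
  have hκ0 : 0 < κ := lt_of_lt_of_le (div_pos (by linarith) hγ0) hκ
  have hM : 4 + 2*τ ≤ κ * γ := (div_le_iff₀ hγ0).mp hκ
  set x : ℝ := 2 + (m₁:ℝ)/α with hxdef
  set y : ℝ := 2 + (m₂:ℝ)/α with hydef
  have hax : κ * γ ≤ |κ * x| := by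
    rw [abs_mul, abs_of_pos hκ0]
    exact mul_le_mul_of_nonneg_left (hxlb m₁) hκ0.le
  have hay : κ * γ ≤ |κ * y| := by
    rw [abs_mul, abs_of_pos hκ0]
    exact mul_le_mul_of_nonneg_left (hxlb m₂) hκ0.le
  by_contra hcon
  push_neg at hcon
  have hre2 : ζ.re^2 < τ^2 := by
    have h := abs_lt.mp hcon
    nlinarith [h.1, h.2]
  -- key factorization
  have key : (ζ^2 - ((1 + (κ*x)^2 : ℝ) : ℂ)) * (ζ^2 - ((1 + (κ*y)^2 : ℝ) : ℂ))
      = ((4*(κ*x)*(κ*y) : ℝ) : ℂ) := by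
    push_cast at heq ⊢
    linear_combination heq
  have hbound : ∀ c : ℝ, c - τ^2 ≤ ‖ζ^2 - (c:ℂ)‖ := by
    intro c
    have hre : (ζ^2 - (c:ℂ)).re = ζ.re^2 - ζ.im^2 - c := by
      simp [pow_two, Complex.mul_re]
    have h1 : c - τ^2 ≤ -((ζ^2 - (c:ℂ)).re) := by
      rw [hre]; nlinarith [sq_nonneg ζ.im]
    exact h1.trans ((neg_le_abs _).trans (Complex.abs_re_le_norm _))
  have h1 := hbound (1 + (κ*x)^2)
  have h2 := hbound (1 + (κ*y)^2)
  have habs : ‖ζ^2 - ((1 + (κ*x)^2 : ℝ) : ℂ)‖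
      * ‖ζ^2 - ((1 + (κ*y)^2 : ℝ) : ℂ)‖ = 4 * |κ*x| * |κ*y| := by
    rw [← norm_mul, key, Complex.norm_real, Real.norm_eq_abs, abs_mul, abs_mul]
    norm_num
  set P : ℝ := ‖ζ^2 - ((1 + (κ*x)^2 : ℝ) : ℂ)‖ with hPdef
  set Q : ℝ := ‖ζ^2 - ((1 + (κ*y)^2 : ℝ) : ℂ)‖ with hQdef
  set ax : ℝ := |κ*x| with haxdef
  set ay : ℝ := |κ*y| with haydef
  have hsqx : (κ*x)^2 = ax^2 := (sq_abs _).symm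
  have hsqy : (κ*y)^2 = ay^2 := (sq_abs _).symm
  have hM0 : 0 < κ * γ := mul_pos hκ0 hγ0
  have hτM : τ^2 ≤ (κ*γ)^2 / 4 := by nlinarith [sq_nonneg (κ*γ - 2*τ), hM, hτ]
  have haxM : (κ*γ)^2 ≤ ax^2 := pow_le_pow_left₀ hM0.le hax 2
  have hayM : (κ*γ)^2 ≤ ay^2 := pow_le_pow_left₀ hM0.le hay 2
  have hP3 : 3/4 * ax^2 + 1 ≤ P := by rw [hsqx] at h1; linarith
  have hQ3 : 3/4 * ay^2 + 1 ≤ Q := by rw [hsqy] at h2; linarith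
  have hPQ : (3/4 * ax^2 + 1) * (3/4 * ay^2 + 1) ≤ 4 * ax * ay := by
    calc (3/4 * ax^2 + 1) * (3/4 * ay^2 + 1) ≤ P * Q :=
          mul_le_mul hP3 hQ3 (by positivity) ((by positivity : (0:ℝ) ≤ 3/4 * ax^2 + 1).trans hP3)
      _ = 4 * ax * ay := habs
  have hax4 : 4 ≤ ax := le_trans (by linarith) hax
  have hay4 : 4 ≤ ay := le_trans (by linarith) hay
  have hprod : 16 ≤ ax * ay := by
    calc (16:ℝ) = 4 * 4 := by norm_num
      _ ≤ ax * ay := mul_le_mul hax4 hay4 (by norm_num) (by linarith)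
  have hexp : 9/16 * (ax*ay)^2 + 3/4*ax^2 + 3/4*ay^2 + 1
      = (3/4 * ax^2 + 1) * (3/4 * ay^2 + 1) := by ring
  have h9 : 9/16 * (ax*ay)^2 ≤ 4 * (ax*ay) := by
    linarith [hPQ, sq_nonneg ax, sq_nonneg ay, hexp]
  linarith [h9, hprod, sq_nonneg (ax*ay - 16)]
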